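/- Let G be an ancestral graph, let X and Y be disjoint node sets, and let Z be an m-separator relative to (X,Y). If the set Z ∪ {Z₁, …, Zₙ} is also an m-separator relative to (X,Y), where Z₁, …, Zₙ are distinct nodes not in Z (and not in X ∪ Y), then for some i ∈ {1,…,n} the set Z ∪ {Zᵢ} is an m-separator relative to (X,Y). -/
import Mathlib


/-!
Common definitions: mixed graphs, walks, colliders, m-separation,
ancestral graphs, DAGs, MAGs, proper causal paths, adjustment criteria,
inducing paths, and MAG marginalization.
-/

universe u

/-- The four possible kinds of edges of a mixed graph, oriented along the
direction of traversal: `u → v`, `u ← v`, `u ↔ v`, `u − v`. -/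
inductive EType where
  | right : EType
  | left : EType
  | both : EType
  | undirEdge : EType
deriving DecidableEq

namespace EType

/-- The edge has an arrowhead at its first endpoint. -/
def headFst : EType → Prop
  | .left => True
  | .both => True
  | _ => False

/-- The edge has an arrowhead at its second endpoint. -/
def headSnd : EType → Prop
  | .right => True
  | .both => True
  | _ => False

end EType

/-- A mixed graph with directed, bidirected and undirected edges. -/
structure MixedGraph (V : Type u) where
  dir : V → V → Prop
  bi : V → V → Prop
  undir : V → V → Prop
  bi_symm : ∀ u v, bi u v → bi v u
  undir_symm : ∀ u v, undir u v → undir v u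

namespace MixedGraph

variable {V : Type u}

/-- `G.IsEdge e u v` holds if the graph contains the edge `e` from `u` to `v`
(read in the direction of traversal). -/
def IsEdge (G : MixedGraph V) : EType → V → V → Prop
  | .right, u, v => G.dir u v
  | .left, u, v => G.dir v u
  | .both, u, v => G.bi u v
  | .undirEdge, u, v => G.undir u v

/-- Walks in a mixed graph, remembering the type of every traversed edge. -/
inductive Walk (G : MixedGraph V) : V → V → Type u
  | nil (v : V) : Walk G v v
  | cons (u v w : V) (e : EType) (h : G.IsEdge e u v) (p : Walk G v w) : Walk G u w

namespace Walk

variable {G : MixedGraph V}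

/-- The list of nodes visited by a walk (with multiplicity). -/
def support : {a b : V} → G.Walk a b → List V
  | _, _, .nil v => [v]
  | _, _, .cons u _ _ _ _ p => u :: p.support

/-- A path is a walk without repeated nodes. -/
def IsPath {a b : V} (p : G.Walk a b) : Prop := p.support.Nodup

/-- Auxiliary m-connectivity check: `ph` records whether the previous edge of
the walk has an arrowhead at the current start node.  At every interior node,
the node must be a collider (two arrowheads meet) iff it belongs to `Z`. -/
def connFrom (Z : Set V) : Prop → {a b : V} → G.Walk a b → Prop
  | _, _, _, .nil _ => True
  | ph, _, _, .cons u _ _ e _ p =>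
      ((ph ∧ e.headFst) ↔ u ∈ Z) ∧ p.connFrom Z e.headSnd

/-- The walk m-connects its endpoints given `Z`: all colliders and only
colliders on it are in `Z`. -/
def ConnBy (Z : Set V) : {a b : V} → G.Walk a b → Prop
  | _, _, .nil _ => True
  | _, _, .cons _ _ _ e _ p => p.connFrom Z e.headSnd

/-- A causal (directed) walk: every edge points towards the end node. -/
def IsCausal : {a b : V} → G.Walk a b → Prop
  | _, _, .nil _ => True
  | _, _, .cons _ _ _ e _ p => e = EType.right ∧ p.IsCausal

/-- A walk is proper w.r.t. `X` if only its start node may belong to `X`. -/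
def ProperFrom (X : Set V) : {a b : V} → G.Walk a b → Prop
  | _, _, .nil _ => True
  | _, _, .cons _ _ _ _ _ p => ∀ n ∈ p.support, n ∉ X

/-- Concatenation of walks. -/
def append : {a b c : V} → G.Walk a b → G.Walk b c → G.Walk a c
  | _, _, _, .nil _, q => q
  | _, _, _, .cons u v _ e h p, q => .cons u v _ e h (p.append q)

/-- The walk is nonempty and its first edge has an arrowhead at the start
node. -/
def headAtStart : {a b : V} → G.Walk a b → Prop
  | _, _, .nil _ => False
  | _, _, .cons _ _ _ e _ _ => e.headFst

/-- The walk is nonempty and its last edge has an arrowhead at the end node. -/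
def headAtEnd : {a b : V} → G.Walk a b → Prop
  | _, _, .nil _ => False
  | _, _, .cons _ _ _ e _ (.nil _) => e.headSnd
  | _, _, .cons _ _ _ _ _ p => p.headAtEnd

/-- `P` holds of every (ordered) pair of consecutive nodes of the walk. -/
def edgeProp (P : V → V → Prop) : {a b : V} → G.Walk a b → Prop
  | _, _, .nil _ => True
  | _, _, .cons u v _ _ _ p => P u v ∧ p.edgeProp P

end Walk

/-- `x` and `y` are m-connected given `Z`: there is a walk between them on
which all colliders and only colliders are in `Z`. -/
def MConn (G : MixedGraph V) (Z : Set V) (x y : V) : Prop :=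
  ∃ p : G.Walk x y, p.ConnBy Z

/-- `Z` m-separates the node sets `X` and `Y`. -/
def MSep (G : MixedGraph V) (X Y Z : Set V) : Prop :=
  ∀ x ∈ X, ∀ y ∈ Y, ¬ G.MConn Z x y

/-- `Z` is an m-separator relative to `(X, Y)`: it is disjoint from `X ∪ Y`
and m-separates `X` and `Y`. -/
def IsMSep (G : MixedGraph V) (X Y Z : Set V) : Prop :=
  Disjoint Z (X ∪ Y) ∧ G.MSep X Y Z

/-- An `M`-minimal m-separator relative to `(X, Y)`. -/
def IsMinMSep (G : MixedGraph V) (X Y M Z : Set V) : Prop :=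
  G.IsMSep X Y Z ∧ M ⊆ Z ∧ ∀ Z', Z' ⊂ Z → M ⊆ Z' → ¬ G.IsMSep X Y Z'

/-- One step of the anterior relation: a directed or undirected edge. -/
def antEdge (G : MixedGraph V) (u v : V) : Prop := G.dir u v ∨ G.undir u v

/-- `u` is an anterior of `v` (every node is its own anterior). -/
def Anterior (G : MixedGraph V) (u v : V) : Prop :=
  Relation.ReflTransGen G.antEdge u v

/-- The set of anteriors of nodes of `W`. -/
def Ant (G : MixedGraph V) (W : Set V) : Set V := {u | ∃ w ∈ W, G.Anterior u w}

/-- `v` is a descendant of `u`, i.e. there is a directed path `u → ⋯ → v`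
(every node is its own descendant/ancestor). -/
def Anc (G : MixedGraph V) (u v : V) : Prop := Relation.ReflTransGen G.dir u v

/-- The set of descendants of nodes of `W`. -/
def De (G : MixedGraph V) (W : Set V) : Set V := {v | ∃ w ∈ W, G.Anc w v}

/-- The set of ancestors of nodes of `W`. -/
def AnSet (G : MixedGraph V) (W : Set V) : Set V := {v | ∃ w ∈ W, G.Anc v w}

/-- An ancestral graph: (1) for each edge `a ← b` or `a ↔ b`, `a` is not an
anterior of `b`; (2) for each edge `a − b` there is no edge `a ← c`, `a ↔ c`,
`b ← c` or `b ↔ c`. -/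
def IsAG (G : MixedGraph V) : Prop :=
  (∀ a b, G.dir b a ∨ G.bi a b → ¬ G.Anterior a b) ∧
  (∀ a b, G.undir a b →
    ∀ c, ¬ G.dir c a ∧ ¬ G.bi a c ∧ ¬ G.dir c b ∧ ¬ G.bi b c)

/-- A DAG: only directed edges, and no directed cycles. -/
def IsDAG (G : MixedGraph V) : Prop :=
  (∀ u v, ¬ G.bi u v) ∧ (∀ u v, ¬ G.undir u v) ∧
  (∀ v, ¬ Relation.TransGen G.dir v v)

/-- Two nodes are adjacent if they are joined by some edge. -/
def Adjacent (G : MixedGraph V) (u v : V) : Prop :=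
  G.dir u v ∨ G.dir v u ∨ G.bi u v ∨ G.undir u v

/-- A maximal ancestral graph (MAG): only directed and bidirected edges, no
directed cycle, no almost-directed cycle, and every pair of non-adjacent
nodes can be m-separated by some set of the remaining nodes. -/
def IsMAG (G : MixedGraph V) : Prop :=
  (∀ u v, ¬ G.undir u v) ∧
  (∀ v, ¬ Relation.TransGen G.dir v v) ∧
  (∀ u v, G.bi u v → ¬ Relation.TransGen G.dir v u) ∧
  (∀ u v, u ≠ v → ¬ G.Adjacent u v →
    ∃ Z : Set V, u ∉ Z ∧ v ∉ Z ∧ ¬ G.MConn Z u v)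

/-- `PCP G X Y`: the set of nodes, excluding nodes of `X`, that lie on a
proper causal path from `X` to `Y`. -/
def PCP (G : MixedGraph V) (X Y : Set V) : Set V :=
  {w | w ∉ X ∧ ∃ x ∈ X, ∃ y ∈ Y, ∃ p : G.Walk x y,
    p.IsPath ∧ p.IsCausal ∧ p.ProperFrom X ∧ w ∈ p.support}

/-- `Dpcp G X Y`: the descendants of nodes on proper causal paths. -/
def Dpcp (G : MixedGraph V) (X Y : Set V) : Set V := G.De (G.PCP X Y)

/-- Remove from `G` all edges into `A` and all edges out of `B`. -/
def rmInOut (G : MixedGraph V) (A B : Set V) : MixedGraph V where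
  dir u v := G.dir u v ∧ v ∉ A ∧ u ∉ B
  bi u v := G.bi u v ∧ u ∉ A ∧ v ∉ A
  undir u v := G.undir u v ∧ u ∉ B ∧ v ∉ B
  bi_symm := fun u v h => ⟨G.bi_symm u v h.1, h.2.2, h.2.1⟩
  undir_symm := fun u v h => ⟨G.undir_symm u v h.1, h.2.2, h.2.1⟩

/-- The parametrized proper back-door graph: remove every edge `x → d` with
`x ∈ X` and `d ∈ PCP(X,Y) ∪ C`. -/
def pbdC (G : MixedGraph V) (X Y C : Set V) : MixedGraph V where
  dir u v := G.dir u v ∧ ¬(u ∈ X ∧ v ∈ G.PCP X Y ∪ C)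
  bi := G.bi
  undir := G.undir
  bi_symm := G.bi_symm
  undir_symm := G.undir_symm

/-- The proper back-door graph. -/
def pbd (G : MixedGraph V) (X Y : Set V) : MixedGraph V := G.pbdC X Y ∅

/-- The adjustment criterion (AC) in a DAG: (a) no element of `Z` is a
descendant in `G_{X̄}` of a node outside `X` lying on a proper causal path
from `X` to `Y`; (b) every proper non-causal path from `X` to `Y` is blocked
by `Z`. -/
def SatisfiesACdag (G : MixedGraph V) (X Y Z : Set V) : Prop :=
  (∀ z ∈ Z, z ∉ (G.rmInOut X ∅).De (G.PCP X Y)) ∧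
  (∀ x ∈ X, ∀ y ∈ Y, ∀ p : G.Walk x y,
    p.IsPath → p.ProperFrom X → ¬ p.IsCausal → ¬ p.ConnBy Z)

/-- The adjustment criterion (AC) in a MAG: (a) no element of `Z` is a
descendant in `M` of a node outside `X` lying on a proper causal path from
`X` to `Y`; (b) every proper non-causal path from `X` to `Y` is blocked by
`Z`. -/
def SatisfiesACmag (G : MixedGraph V) (X Y Z : Set V) : Prop :=
  (∀ z ∈ Z, z ∉ G.Dpcp X Y) ∧
  (∀ x ∈ X, ∀ y ∈ Y, ∀ p : G.Walk x y,
    p.IsPath → p.ProperFrom X → ¬ p.IsCausal → ¬ p.ConnBy Z)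

/-- The constructive back-door criterion (CBC): (a) `Z` avoids
`Dpcp(X,Y)`; (b) `Z` m-separates `X` and `Y` in the proper back-door
graph. -/
def SatisfiesCBC (G : MixedGraph V) (X Y Z : Set V) : Prop :=
  (∀ z ∈ Z, z ∉ G.Dpcp X Y) ∧ (G.pbd X Y).MSep X Y Z

/-- The parametrized constructive back-door criterion CBC(A,B,C). -/
def SatisfiesCBCP (G : MixedGraph V) (X Y Z A B C : Set V) : Prop :=
  (∀ z ∈ Z, z ∉ (G.rmInOut A B).De (G.PCP X Y)) ∧ (G.pbdC X Y C).MSep X Y Z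

namespace Walk

variable {G : MixedGraph V}

/-- Auxiliary check for inducing paths: every interior non-collider is in
`L`, and every interior collider is an ancestor of a node of `T`.  `ph`
records whether the previous edge has an arrowhead at the current node. -/
def indFrom (L T : Set V) : Prop → {a b : V} → G.Walk a b → Prop
  | _, _, _, .nil _ => True
  | ph, _, _, .cons u _ _ e _ p =>
      ((ph ∧ e.headFst) → ∃ t ∈ T, Relation.ReflTransGen G.dir u t) ∧
      (¬(ph ∧ e.headFst) → u ∈ L) ∧ p.indFrom L T e.headSnd

/-- Interior conditions for inducing paths (endpoints are exempt). -/
def indBody (L T : Set V) : {a b : V} → G.Walk a b → Prop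
  | _, _, .nil _ => True
  | _, _, .cons _ _ _ e _ p => p.indFrom L T e.headSnd

end Walk

/-- `p` is an inducing path with respect to `Z` and `L`: a path on which
every non-collider other than the endpoints is in `L` and every collider is
an ancestor of the endpoints or of `Z`. -/
def IsInducing (G : MixedGraph V) (Z L : Set V) {a b : V} (p : G.Walk a b) : Prop :=
  p.IsPath ∧ p.indBody L ({a, b} ∪ Z)

/-- Adjacency in the MAG `G[∅_L`: `u, v ∉ L` are adjacent iff they cannot be
d-separated in `G` by any set `W ⊆ V∖L` (not containing `u, v`). -/
def magAdj (G : MixedGraph V) (L : Set V) (u v : V) : Prop :=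
  u ∉ L ∧ v ∉ L ∧ u ≠ v ∧
  ∀ W : Set V, Disjoint W L → u ∉ W → v ∉ W → (G.MConn W u v ∧ G.MConn W v u)

/-- The MAG `G[∅_L` obtained from the DAG `G` by marginalizing `L`: adjacent
`u, v` are joined by `u → v` if `u` is an ancestor of `v` in `G` and `v` is
not an ancestor of `u`, and by `u ↔ v` if neither is an ancestor of the
other. -/
def mag (G : MixedGraph V) (L : Set V) : MixedGraph V where
  dir u v := G.magAdj L u v ∧ G.Anc u v ∧ ¬ G.Anc v u
  bi u v := G.magAdj L u v ∧ ¬ G.Anc u v ∧ ¬ G.Anc v u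
  undir _ _ := False
  bi_symm := fun u v h =>
    ⟨⟨h.1.2.1, h.1.1, h.1.2.2.1.symm,
      fun W hW hv hu => ⟨(h.1.2.2.2 W hW hu hv).2, (h.1.2.2.2 W hW hu hv).1⟩⟩,
      h.2.2, h.2.1⟩
  undir_symm := fun _ _ h => h.elim

/-- An inducing `Z`-trail in the MAG `G[∅_L`: a path whose interior nodes are
exactly the `Z`-nodes on it, each consecutive pair being linked in `G` by an
inducing path w.r.t. `∅, L` which has arrowheads at the interior nodes. -/
def IsInducingZTrail (G : MixedGraph V) (Z L : Set V) {a b : V}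
    (p : (G.mag L).Walk a b) : Prop :=
  p.IsPath ∧ a ∉ Z ∧ b ∉ Z ∧
  (∀ v ∈ p.support, v ≠ a → v ≠ b → v ∈ Z) ∧
  p.edgeProp (fun u v => ∃ q : G.Walk u v, G.IsInducing ∅ L q ∧
    (u ∈ Z → q.headAtStart) ∧ (v ∈ Z → q.headAtEnd))

end MixedGraph

open MixedGraph

variable {V : Type u}



section Aux

namespace MixedGraph

variable {V : Type u} {G : MixedGraph V}

/-- `w` has some edge with an arrowhead at `w`. -/
def HasHeadAt (G : MixedGraph V) (w : V) : Prop := ∃ c, G.dir c w ∨ G.bi w c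

namespace Walk

/-- Whether the last edge of the walk has a head at the end node
(`ph` if the walk is empty). -/
def lastH : {a b : V} → G.Walk a b → Prop → Prop
  | _, _, .nil _, ph => ph
  | _, _, .cons _ _ _ e _ p, _ => p.lastH e.headSnd

lemma connFrom_congr_ph {Z : Set V} :
    ∀ {a b} (p : G.Walk a b) {ph ph' : Prop}, (ph ↔ ph') →
      (p.connFrom Z ph ↔ p.connFrom Z ph')
  | _, _, .nil _, _, _, _ => Iff.rfl
  | _, _, .cons u v w e h p, ph, ph', hiff => by
      simp only [Walk.connFrom]
      constructor <;> rintro ⟨h1, h2⟩ <;> exact ⟨by tauto, h2⟩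

lemma connFrom_append {Z : Set V} :
    ∀ {a b c} (p : G.Walk a b) (q : G.Walk b c) (ph : Prop),
      (p.append q).connFrom Z ph ↔ (p.connFrom Z ph ∧ q.connFrom Z (p.lastH ph))
  | _, _, _, .nil _, q, ph => by simp [Walk.append, Walk.connFrom, Walk.lastH]
  | _, _, _, .cons u v w e h p, q, ph => by
      simp only [Walk.append, Walk.connFrom, Walk.lastH, connFrom_append p q e.headSnd]
      tauto

lemma lastH_append {a b c : V} (p : G.Walk a b) (q : G.Walk b c) (ph : Prop) :
    (p.append q).lastH ph = q.lastH (p.lastH ph) := by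
  induction p generalizing ph with
  | nil => rfl
  | cons u v w e h p ih => exact ih q e.headSnd

lemma append_assoc : ∀ {a b c d : V} (p : G.Walk a b) (q : G.Walk b c) (r : G.Walk c d),
    (p.append q).append r = p.append (q.append r)
  | _, _, _, _, .nil _, _, _ => rfl
  | _, _, _, _, .cons u v w e h p, q, r => by
      simp [Walk.append, append_assoc p q r]

end Walk

open Walk

lemma fwd (hAG : G.IsAG) {S : Set V} :
    ∀ {c b} (p : G.Walk c b) (ph : Prop),
      p.connFrom S ph → (¬ph → ∃ u, G.undir u c) →
      ∃ t, (t ∈ S ∨ t = b) ∧ G.Anterior c t := by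
  intro c b p
  induction p with
  | nil c => exact fun ph _ _ => ⟨c, Or.inr rfl, Relation.ReflTransGen.refl⟩
  | cons u v w e he p ih =>
    intro ph hconn hun
    obtain ⟨hiff, hp⟩ := hconn
    by_cases hu : u ∈ S
    · exact ⟨u, Or.inl hu, Relation.ReflTransGen.refl⟩
    have hnc : ¬(ph ∧ e.headFst) := fun h => hu (hiff.mp h)
    by_cases hf : e.headFst
    · -- backward tail at u: previous edge undirected, current edge head at u: AG(2) contra
      have hph : ¬ ph := fun h => hnc ⟨h, hf⟩
      obtain ⟨u', hu'⟩ := hun hph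
      have h2 := hAG.2 u' u hu' v
      cases e with
      | left => exact absurd he h2.2.2.1
      | both => exact absurd he h2.2.2.2
      | right => exact absurd hf (by simp [EType.headFst])
      | undirEdge => exact absurd hf (by simp [EType.headFst])
    · -- forward tail at u
      have hadj : G.antEdge u v := by
        cases e with
        | right => exact Or.inl he
        | undirEdge => exact Or.inr he
        | left => exact absurd (by trivial : EType.headFst .left) hf
        | both => exact absurd (by trivial : EType.headFst .both) hf
      have hun' : ¬e.headSnd → ∃ u', G.undir u' v := by
        intro hns
        cases e with
        | undirEdge => exact ⟨u, he⟩
        | right => exact absurd (by trivial : EType.headSnd .right) hns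
        | both => exact absurd (by trivial : EType.headSnd .both) hns
        | left => exact absurd (by trivial : EType.headFst .left) hf
      obtain ⟨t, ht, hant⟩ := ih e.headSnd hp hun'
      exact ⟨t, ht, Relation.ReflTransGen.head hadj hant⟩

lemma dich (hAG : G.IsAG) {S R' : Set V} {P : V → Prop} (hPS : ∀ t ∈ S, P t) :
    ∀ {c b} (p : G.Walk c b) (ph : Prop), P b →
      p.connFrom S ph →
      (¬ph → ∃ t, P t ∧ G.Anterior c t) →
      (ph → G.HasHeadAt c) →
      p.connFrom (S ∪ R') ph ∨ ∃ u, u ∈ R' ∧ u ∉ S ∧ ∃ t, P t ∧ G.Anterior u t := by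
  intro c b p
  induction p with
  | nil c => exact fun ph _ _ _ _ => Or.inl trivial
  | cons u v w e he p ih =>
    intro ph hPb hconn hB hH
    obtain ⟨hiff, hp⟩ := hconn
    have hB' : ¬e.headSnd → ∃ t, P t ∧ G.Anterior v t := by
      intro hns
      have hvu : G.antEdge v u := by
        cases e with
        | left => exact Or.inl he
        | undirEdge => exact Or.inr (G.undir_symm _ _ he)
        | right => exact absurd (by trivial : EType.headSnd .right) hns
        | both => exact absurd (by trivial : EType.headSnd .both) hns
      by_cases hu : u ∈ S
      · exact ⟨u, hPS u hu, Relation.ReflTransGen.single hvu⟩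
      have hnc : ¬(ph ∧ e.headFst) := fun h => hu (hiff.mp h)
      by_cases hph : ph
      · -- e has no head at u nor v: undirected; but head into u: AG(2) contra
        have hf : ¬e.headFst := fun h => hnc ⟨hph, h⟩
        have huv : G.undir u v := by
          cases e with
          | undirEdge => exact he
          | right => exact absurd (by trivial : EType.headSnd .right) hns
          | both => exact absurd (by trivial : EType.headSnd .both) hns
          | left => exact absurd (by trivial : EType.headFst .left) hf
        obtain ⟨c', hc'⟩ := hH hph
        have h2 := hAG.2 u v huv c'
        rcases hc' with h | h
        · exact absurd h h2.1
        · exact absurd h h2.2.1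
      · obtain ⟨t, hPt, hat⟩ := hB hph
        exact ⟨t, hPt, Relation.ReflTransGen.head hvu hat⟩
    have hH' : e.headSnd → G.HasHeadAt v := by
      intro hhs
      cases e with
      | right => exact ⟨u, Or.inl he⟩
      | both => exact ⟨u, Or.inr (G.bi_symm _ _ he)⟩
      | left => exact absurd hhs (by simp [EType.headSnd])
      | undirEdge => exact absurd hhs (by simp [EType.headSnd])
    rcases ih e.headSnd hPb hp hB' hH' with hq | hbad
    · by_cases hcol : ph ∧ e.headFst
      · exact Or.inl ⟨iff_of_true hcol (Or.inl (hiff.mp hcol)), hq⟩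
      · have hu : u ∉ S := fun h => hcol (hiff.mpr h)
        by_cases hR : u ∈ R'
        · refine Or.inr ⟨u, hR, hu, ?_⟩
          by_cases hph : ph
          · have hf : ¬e.headFst := fun h => hcol ⟨hph, h⟩
            have hadj : G.antEdge u v := by
              cases e with
              | right => exact Or.inl he
              | undirEdge => exact Or.inr he
              | left => exact absurd (by trivial : EType.headFst .left) hf
              | both => exact absurd (by trivial : EType.headFst .both) hf
            have hun' : ¬e.headSnd → ∃ u', G.undir u' v := by
              intro hns
              cases e with
              | undirEdge => exact ⟨u, he⟩
              | right => exact absurd (by trivial : EType.headSnd .right) hns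
              | both => exact absurd (by trivial : EType.headSnd .both) hns
              | left => exact absurd (by trivial : EType.headFst .left) hf
            obtain ⟨t, ht, hant⟩ := fwd hAG p e.headSnd hp hun'
            refine ⟨t, ?_, Relation.ReflTransGen.head hadj hant⟩
            rcases ht with h | h
            · exact hPS t h
            · exact h ▸ hPb
          · exact hB hph
        · exact Or.inl ⟨iff_of_false hcol (by simp [hu, hR]), hq⟩
    · exact Or.inr hbad

lemma occ' {Z : Set V} {v : V} :
    ∀ {a b} (p : G.Walk a b) (ph : Prop),
      p.connFrom (Z ∪ {v}) ph → p.connFrom Z ph ∨ G.HasHeadAt v := by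
  intro a b p
  induction p with
  | nil => exact fun _ _ => Or.inl trivial
  | cons u u' w e he p ih =>
    intro ph hconn
    obtain ⟨hiff, hp⟩ := hconn
    rcases ih e.headSnd hp with hq | hh
    · by_cases huv : u = v
      · subst huv
        have hcol : ph ∧ e.headFst := hiff.mpr (Or.inr rfl)
        cases e with
        | left => exact Or.inr ⟨u', Or.inl he⟩
        | both => exact Or.inr ⟨u', Or.inr he⟩
        | right => exact absurd hcol.2 (by simp [EType.headFst])
        | undirEdge => exact absurd hcol.2 (by simp [EType.headFst])
      · refine Or.inl ⟨hiff.trans ?_, hq⟩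
        simp [Set.mem_union, huv]
    · exact Or.inr hh


lemma dirAnt (hAG : G.IsAG) {v t : V} (hh : G.HasHeadAt v) (hant : G.Anterior v t) :
    G.Anc v t := by
  revert hh
  induction hant using Relation.ReflTransGen.head_induction_on with
  | refl => exact fun _ => Relation.ReflTransGen.refl
  | @head a c h' hrest ih =>
    intro hh
    rcases h' with hd | hu
    · exact Relation.ReflTransGen.head hd (ih ⟨a, Or.inl hd⟩)
    · obtain ⟨c', hc'⟩ := hh
      have h2 := hAG.2 a c hu c'
      rcases hc' with h | h
      · exact absurd h h2.1
      · exact absurd h h2.2.1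

lemma firstHit {W : Set V} {t : V} (htW : t ∈ W) {v : V}
    (hanc : G.Anc v t) (hv : v ∉ W) :
    ∃ t' ∈ W, Relation.ReflTransGen (fun a b => G.dir a b ∧ a ∉ W) v t' := by
  revert hv
  induction hanc using Relation.ReflTransGen.head_induction_on with
  | refl => exact fun hv => absurd htW hv
  | @head a c h' hrest ih =>
    intro hv
    by_cases hc : c ∈ W
    · exact ⟨c, hc, Relation.ReflTransGen.single ⟨h', hv⟩⟩
    · obtain ⟨t', ht', hr⟩ := ih hc
      exact ⟨t', ht', Relation.ReflTransGen.head ⟨h', hv⟩ hr⟩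

lemma detour {Z W : Set V} (hZW : Z ⊆ W) {t' : V} (ht' : t' ∈ Z) {v : V}
    (hch : Relation.ReflTransGen (fun a b => G.dir a b ∧ a ∉ W) v t') (hv : v ∉ Z) :
    ∃ d : G.Walk v v, (∀ ph : Prop, d.connFrom Z ph) ∧ (∀ ph, ¬ d.lastH ph) := by
  revert hv
  induction hch using Relation.ReflTransGen.head_induction_on with
  | refl => exact fun hv => absurd ht' hv
  | @head a c h' hrest ih =>
    intro hv
    by_cases hc : c ∈ Z
    · refine ⟨Walk.cons a c a .right h'.1 (Walk.cons c a a .left h'.1 (.nil a)), ?_, ?_⟩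
      · intro ph
        simp only [Walk.connFrom]
        refine ⟨?_, ?_, trivial⟩
        · simp only [EType.headFst, and_false, false_iff]; exact hv
        · simp only [EType.headFst, EType.headSnd, and_true, true_iff]
          simpa using hc
      · intro ph
        simp [Walk.lastH, EType.headSnd]
    · obtain ⟨d', hd', hl'⟩ := ih hc
      refine ⟨Walk.cons a c a .right h'.1
        (d'.append (Walk.cons c a a .left h'.1 (.nil a))), ?_, ?_⟩
      · intro ph
        simp only [Walk.connFrom]
        refine ⟨by simp only [EType.headFst, and_false, false_iff]; exact hv, ?_⟩
        rw [Walk.connFrom_append]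
        refine ⟨hd' _, ?_, trivial⟩
        constructor
        · rintro ⟨h1, -⟩; exact absurd h1 (hl' _)
        · intro h; exact absurd h hc
      · intro ph
        show ¬ (d'.append _).lastH _
        rw [Walk.lastH_append]
        simp [Walk.lastH, EType.headSnd]

lemma downchain {Z W : Set V} (hZW : Z ⊆ W) {t' : V} {v : V}
    (hch : Relation.ReflTransGen (fun a b => G.dir a b ∧ a ∉ W) v t') (hv : v ∉ Z) :
    ∃ dc : G.Walk v t', ∀ ph : Prop, dc.connFrom Z ph := by
  revert hv
  induction hch using Relation.ReflTransGen.head_induction_on with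
  | refl => exact fun _ => ⟨.nil _, fun _ => trivial⟩
  | @head a c h' hrest ih =>
    intro hv
    rcases Relation.ReflTransGen.cases_head hrest with heq | ⟨c'', hstep, -⟩
    · subst heq
      refine ⟨Walk.cons a c c .right h'.1 (.nil c), fun ph => ?_⟩
      simp only [Walk.connFrom]
      exact ⟨by simp only [EType.headFst, and_false, false_iff]; exact hv, trivial⟩
    · have hcZ : c ∉ Z := fun h => hstep.2 (hZW h)
      obtain ⟨dc', hdc'⟩ := ih hcZ
      refine ⟨Walk.cons a c _ .right h'.1 dc', fun ph => ?_⟩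
      simp only [Walk.connFrom]
      exact ⟨by simp only [EType.headFst, and_false, false_iff]; exact hv, hdc' _⟩

lemma revchain {Z W : Set V} (hZW : Z ⊆ W) {t' : V} (ht'W : t' ∈ W) {v : V}
    (hch : Relation.ReflTransGen (fun a b => G.dir a b ∧ a ∉ W) v t') (hne : v ≠ t') :
    ∃ r : G.Walk t' v, ∀ {b : V} (s : G.Walk v b), s.connFrom Z False →
      (r.append s).ConnBy Z := by
  revert hne
  induction hch using Relation.ReflTransGen.head_induction_on with
  | refl => exact fun hne => absurd rfl hne
  | @head a c h' hrest ih =>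
    intro _
    rcases Relation.ReflTransGen.cases_head hrest with heq | ⟨c'', hstep, -⟩
    · subst heq
      refine ⟨Walk.cons c a a .left h'.1 (.nil a), fun s hs => ?_⟩
      show s.connFrom Z (EType.headSnd .left)
      exact (Walk.connFrom_congr_ph s (by simp [EType.headSnd])).mp hs
    · have hcZ : c ∉ Z := fun h => hstep.2 (hZW h)
      have hne' : c ≠ t' := fun h => hstep.2 (h ▸ ht'W)
      obtain ⟨r', hr'⟩ := ih hne'
      refine ⟨r'.append (Walk.cons c a a .left h'.1 (.nil a)), fun s hs => ?_⟩
      rw [Walk.append_assoc]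
      refine hr' (Walk.cons c a _ .left h'.1 s) ?_
      simp only [Walk.connFrom]
      exact ⟨iff_of_false (fun h => h.1) hcZ,
        (Walk.connFrom_congr_ph s (by simp [EType.headSnd])).mp hs⟩

lemma repair1 {Z : Set V} {v : V} (hv : v ∉ Z) (d : G.Walk v v)
    (hd : ∀ ph : Prop, d.connFrom Z ph) (hdl : ∀ ph, ¬ d.lastH ph) :
    ∀ {c b} (p : G.Walk c b) (ph : Prop), p.connFrom (Z ∪ {v}) ph →
      ∃ q : G.Walk c b, q.connFrom Z ph := by
  intro c b p
  induction p with
  | nil c => exact fun ph _ => ⟨.nil c, trivial⟩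
  | cons u u' w e he p ih =>
    intro ph hconn
    obtain ⟨hiff, hp⟩ := hconn
    obtain ⟨q', hq'⟩ := ih e.headSnd hp
    by_cases huv : u = v
    · subst huv
      refine ⟨d.append (Walk.cons u u' w e he q'), ?_⟩
      rw [Walk.connFrom_append]
      refine ⟨hd ph, ?_, hq'⟩
      exact iff_of_false (fun h => (hdl ph) h.1) hv
    · refine ⟨Walk.cons u u' w e he q', ?_, hq'⟩
      exact hiff.trans (by simp [Set.mem_union, huv])

lemma repair3 {Z : Set V} {v t' : V} (dc : G.Walk v t') (hdc : ∀ ph : Prop, dc.connFrom Z ph) :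
    ∀ {c b} (p : G.Walk c b) (ph : Prop), p.connFrom (Z ∪ {v}) ph →
      (∃ q : G.Walk c b, q.connFrom Z ph) ∨ (∃ q : G.Walk c t', q.connFrom Z ph) := by
  intro c b p
  induction p with
  | nil c => exact fun ph _ => Or.inl ⟨.nil c, trivial⟩
  | cons u u' w e he p ih =>
    intro ph hconn
    obtain ⟨hiff, hp⟩ := hconn
    by_cases huv : u = v
    · subst huv
      exact Or.inr ⟨dc, hdc ph⟩
    · have hiff' : (ph ∧ e.headFst) ↔ u ∈ Z := hiff.trans (by simp [Set.mem_union, huv])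
      rcases ih e.headSnd hp with ⟨q', hq'⟩ | ⟨q', hq'⟩
      · exact Or.inl ⟨Walk.cons u u' w e he q', hiff', hq'⟩
      · exact Or.inr ⟨Walk.cons u u' t' e he q', hiff', hq'⟩

lemma repair2 {Z : Set V} {v t' : V} (hv : v ∉ Z) (r : G.Walk t' v)
    (hr : ∀ {b : V} (s : G.Walk v b), s.connFrom Z False → (r.append s).ConnBy Z) :
    ∀ {c b} (p : G.Walk c b) (ph : Prop), p.connFrom (Z ∪ {v}) ph →
      (∃ q : G.Walk c b, q.connFrom Z ph) ∨ (∃ q : G.Walk t' b, q.ConnBy Z) := by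
  intro c b p
  induction p with
  | nil c => exact fun ph _ => Or.inl ⟨.nil c, trivial⟩
  | cons u u' w e he p ih =>
    intro ph hconn
    obtain ⟨hiff, hp⟩ := hconn
    rcases ih e.headSnd hp with ⟨q', hq'⟩ | hdone
    · by_cases huv : u = v
      · subst huv
        refine Or.inr ⟨r.append (Walk.cons u u' w e he q'), ?_⟩
        exact hr (Walk.cons u u' w e he q') ⟨iff_of_false (fun h => h.1) hv, hq'⟩
      · exact Or.inl ⟨Walk.cons u u' w e he q',
          hiff.trans (by simp [Set.mem_union, huv]), hq'⟩
    · exact Or.inr hdone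

/-- Lemma A: a connecting walk given `Z ∪ {v}` where `v` is an anterior of
`X ∪ Y ∪ Z` contradicts `Z` being an m-separator. -/
lemma lemA (hAG : G.IsAG) {X Y Z : Set V} (hZ : G.IsMSep X Y Z)
    {v t : V} (hvZ : v ∉ Z) (hvXY : v ∉ X ∪ Y)
    {x y : V} (hx : x ∈ X) (hy : y ∈ Y) (π : G.Walk x y) (hπ : π.ConnBy (Z ∪ {v}))
    (hant : G.Anterior v t) (ht : t ∈ X ∪ Y ∪ Z) : False := by
  cases π with
  | nil x => exact hZ.2 x hx x hy ⟨.nil x, trivial⟩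
  | cons x c w e he p =>
    have hp : p.connFrom (Z ∪ {v}) e.headSnd := hπ
    -- v has an arrowhead
    have hhv : G.HasHeadAt v := by
      rcases occ' p e.headSnd hp with hq | hh
      · exact (hZ.2 x hx y hy ⟨Walk.cons x c y e he p, hq⟩).elim
      · exact hh
    have hvW : v ∉ X ∪ Y ∪ Z := by
      intro h
      rcases h with h | h
      · exact hvXY h
      · exact hvZ h
    obtain ⟨t', ht'W, hchain⟩ := firstHit ht (dirAnt hAG hhv hant) hvW
    have hZW : Z ⊆ X ∪ Y ∪ Z := Set.subset_union_right
    rcases ht'W with ht'XY | ht'Z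
    · rcases ht'XY with ht'X | ht'Y
      · -- t' ∈ X : reverse chain, new walk from t' to y
        have ht'Z : t' ∉ Z := fun h => (Set.disjoint_left.mp hZ.1 h) (Or.inl ht'X)
        have hne : v ≠ t' := fun h => hvXY (h ▸ Or.inl ht'X)
        obtain ⟨r, hr⟩ := revchain hZW (Or.inl (Or.inl ht'X)) hchain hne
        rcases repair2 hvZ r hr p e.headSnd hp with ⟨q', hq'⟩ | ⟨q, hq⟩
        · exact hZ.2 x hx y hy ⟨Walk.cons x c y e he q', hq'⟩
        · exact hZ.2 t' ht'X y hy ⟨q, hq⟩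
      · -- t' ∈ Y : down chain, new walk from x to t'
        obtain ⟨dc, hdc⟩ := downchain hZW hchain hvZ
        rcases repair3 dc hdc p e.headSnd hp with ⟨q', hq'⟩ | ⟨q', hq'⟩
        · exact hZ.2 x hx y hy ⟨Walk.cons x c y e he q', hq'⟩
        · exact hZ.2 x hx t' ht'Y ⟨Walk.cons x c t' e he q', hq'⟩
    · -- t' ∈ Z : detour
      obtain ⟨d, hd, hdl⟩ := detour hZW ht'Z hchain hvZ
      obtain ⟨q', hq'⟩ := repair1 hvZ d hd hdl p e.headSnd hp
      exact hZ.2 x hx y hy ⟨Walk.cons x c y e he q', hq'⟩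

lemma antisym (hAG : G.IsAG) {a b : V} (hh : G.HasHeadAt b)
    (hab : G.Anterior a b) (hne : a ≠ b) : ¬ G.Anterior b a := by
  rcases Relation.ReflTransGen.cases_tail hab with heq | ⟨c, hac, hcb⟩
  · exact absurd heq.symm hne
  rcases hcb with hd | hu
  · intro hba
    exact hAG.1 b c (Or.inl hd) (hba.trans hac)
  · obtain ⟨c', hc'⟩ := hh
    have h2 := hAG.2 c b hu c'
    rcases hc' with h | h
    · exact absurd h h2.2.2.1
    · exact absurd h h2.2.2.2


end MixedGraph
end Aux

theorem statement_3 (G : MixedGraph V) (hAG : G.IsAG)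
    (X Y Z : Set V) (hXY : Disjoint X Y) (hZ : G.IsMSep X Y Z)
    (n : ℕ) (hn : 0 < n) (f : Fin n → V) (hinj : Function.Injective f)
    (hfZ : ∀ i, f i ∉ Z) (hfXY : ∀ i, f i ∉ X ∪ Y)
    (hZf : G.IsMSep X Y (Z ∪ Set.range f)) :
    ∃ i : Fin n, G.IsMSep X Y (Z ∪ {f i}) := by
  classical
  by_contra hcon
  push_neg at hcon
  have hdisj : ∀ i : Fin n, Disjoint (Z ∪ {f i}) (X ∪ Y) := by
    intro i
    rw [Set.disjoint_left]
    rintro a (ha | ha)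
    · exact Set.disjoint_left.mp hZ.1 ha
    · rw [Set.mem_singleton_iff] at ha; subst ha; exact hfXY i
  have hex : ∀ i : Fin n, ∃ x ∈ X, ∃ y ∈ Y, G.MConn (Z ∪ {f i}) x y := by
    intro i
    have h1 := hcon i
    have h2 : ¬ G.MSep X Y (Z ∪ {f i}) := fun h => h1 ⟨hdisj i, h⟩
    unfold MixedGraph.MSep at h2
    push_neg at h2
    exact h2
  have key : ∀ i : Fin n, G.HasHeadAt (f i) ∧
      ∃ j : Fin n, f j ≠ f i ∧ G.Anterior (f j) (f i) := by
    intro i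
    obtain ⟨x, hx, y, hy, π, hπ⟩ := hex i
    cases π with
    | nil x => exact (hZ.2 x hx x hy ⟨.nil x, trivial⟩).elim
    | cons x c w e he p =>
      have hp : p.connFrom (Z ∪ {f i}) e.headSnd := hπ
      have hhead : G.HasHeadAt (f i) := by
        rcases MixedGraph.occ' p e.headSnd hp with hq | hh
        · exact (hZ.2 x hx y hy ⟨Walk.cons x c y e he p, hq⟩).elim
        · exact hh
      refine ⟨hhead, ?_⟩
      have hB : ¬e.headSnd → ∃ t', ((t' ∈ X ∪ Y ∪ Z ∨ t' = f i)) ∧ G.Anterior c t' := by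
        intro hns
        refine ⟨x, Or.inl (Or.inl (Or.inl hx)), Relation.ReflTransGen.single ?_⟩
        cases e with
        | left => exact Or.inl he
        | undirEdge => exact Or.inr (G.undir_symm _ _ he)
        | right => exact absurd (by trivial : EType.headSnd .right) hns
        | both => exact absurd (by trivial : EType.headSnd .both) hns
      have hH : e.headSnd → G.HasHeadAt c := by
        intro hhs
        cases e with
        | right => exact ⟨x, Or.inl he⟩
        | both => exact ⟨x, Or.inr (G.bi_symm _ _ he)⟩
        | left => exact absurd hhs (by simp [EType.headSnd])
        | undirEdge => exact absurd hhs (by simp [EType.headSnd])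
      have hPS : ∀ t' ∈ Z ∪ {f i}, (t' ∈ X ∪ Y ∪ Z ∨ t' = f i) := by
        rintro t' (h | h)
        · exact Or.inl (Or.inr h)
        · exact Or.inr h
      rcases MixedGraph.dich (R' := Set.range f) hAG hPS p e.headSnd
          (Or.inl (Or.inl (Or.inr hy))) hp hB hH with hq | ⟨u, huR, huS, t, hPt, hant⟩
      · have hset : (Z ∪ {f i}) ∪ Set.range f = Z ∪ Set.range f := by
          rw [Set.union_assoc]
          congr 1
          exact Set.union_eq_self_of_subset_left (Set.singleton_subset_iff.mpr ⟨i, rfl⟩)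
        rw [hset] at hq
        exact (hZf.2 x hx y hy ⟨Walk.cons x c y e he p, hq⟩).elim
      · obtain ⟨j, rfl⟩ := huR
        rcases hPt with ht | rfl
        · obtain ⟨x', hx', y', hy', π', hπ'⟩ := hex j
          have hfjZ : f j ∉ Z := hfZ j
          exact (MixedGraph.lemA hAG hZ hfjZ (hfXY j) hx' hy' π' hπ' hant ht).elim
        · exact ⟨j, fun h => huS (Or.inr h), hant⟩
  choose hhead g hgne hgant using key
  let a : ℕ → Fin n := fun t => g^[t] ⟨0, hn⟩
  have hstep : ∀ t : ℕ, f (a (t+1)) ≠ f (a t) ∧ G.Anterior (f (a (t+1))) (f (a t)) := by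
    intro t
    have h : a (t+1) = g (a t) := Function.iterate_succ_apply' g t _
    rw [h]
    exact ⟨hgne (a t), hgant (a t)⟩
  have hchain : ∀ (d r : ℕ), G.Anterior (f (a (r+d))) (f (a r)) := by
    intro d
    induction d with
    | zero => exact fun r => Relation.ReflTransGen.refl
    | succ d ih =>
      intro r
      exact (hstep (r+d)).2.trans (ih r)
  have final : ∀ s t : ℕ, s < t → a s = a t → False := by
    intro s t hst hEq
    have h1 : G.Anterior (f (a t)) (f (a (s+1))) := by
      have := hchain (t - (s+1)) (s+1)
      rwa [show s+1 + (t-(s+1)) = t by omega] at this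
    have h2 := hstep s
    have h3 := MixedGraph.antisym hAG (hhead (a s)) h2.2 h2.1
    rw [← hEq] at h1
    exact h3 h1
  have hninj : ¬ Function.Injective (fun t : Fin (n+1) => a t.val) := by
    intro hinj'
    have := Fintype.card_le_of_injective _ hinj'
    simp [Fintype.card_fin] at this
  obtain ⟨s, t, heq, hne⟩ := Function.not_injective_iff.mp hninj
  rcases lt_or_gt_of_ne (show s.val ≠ t.val from fun h => hne (Fin.ext h)) with h | h
  · exact final s.val t.val h (by simpa using heq)
  · exact final t.val s.val h (by simpa using heq.symm)
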